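/- Let λ > 1 and α ≥ 0, and define D(y) = y(1+2αy)/(λ(1 - e^{-y(1+αy)})) + y(1+2αy) for y > 0. Then D is strictly increasing on (0, ∞), D(0⁺) = 1/λ < 1, and D(y_c) > 1, where y_c > 0 satisfies y_c(1+αy_c) = ln λ. Consequently there is a unique y_d ∈ (0, y_c) with D(y_d) = 1. -/

import Mathlib

open Filter Set

lemma one_sub_exp_pos {t : ℝ} (ht : 0 < t) : 0 < 1 - Real.exp (-t) := by
  have h : Real.exp (-t) < Real.exp 0 := Real.exp_lt_exp.mpr (by linarith)
  rw [Real.exp_zero] at h; linarith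

lemma phi_mono {s t : ℝ} (hs : 0 < s) (hst : s < t) :
    s / (1 - Real.exp (-s)) < t / (1 - Real.exp (-t)) := by
  have ht : 0 < t := hs.trans hst
  have h1 := one_sub_exp_pos hs
  have h2 := one_sub_exp_pos ht
  have key := strictConvexOn_exp.2 (Set.mem_univ (-t)) (Set.mem_univ 0)
    (neg_ne_zero.mpr ht.ne') (show (0:ℝ) < s / t by positivity)
    (show (0:ℝ) < 1 - s / t by have := (div_lt_one ht).mpr hst; linarith)
    (show s / t + (1 - s / t) = 1 by ring)
  simp only [smul_eq_mul, mul_zero, add_zero, Real.exp_zero, mul_one] at key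
  have harg : s / t * (-t) = -s := by field_simp
  rw [harg] at key
  have h3 := mul_lt_mul_of_pos_left key ht
  have h4 : t * (s / t * Real.exp (-t) + (1 - s / t)) = s * Real.exp (-t) + (t - s) := by
    field_simp
  rw [h4] at h3
  rw [div_lt_div_iff₀ h1 h2]
  nlinarith [h3]

lemma upos {a y : ℝ} (ha : 0 ≤ a) (hy : 0 < y) : 0 < y * (1 + a * y) := by
  nlinarith [mul_nonneg ha (mul_self_nonneg y)]

lemma Deq (lam α y : ℝ) (hlam : 1 < lam) (hy : 0 < y) (hα : 0 ≤ α) :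
    y * (1 + 2 * α * y) / (lam * (1 - Real.exp (-(y * (1 + α * y))))) + y * (1 + 2 * α * y)
      = (y * (1 + α * y)) / (1 - Real.exp (-(y * (1 + α * y)))) *
          ((1 + 2 * α * y) / (lam * (1 + α * y))) + y * (1 + 2 * α * y) := by
  have hu : 0 < y * (1 + α * y) := upos hα hy
  have h1 := one_sub_exp_pos hu
  have h2 : (0:ℝ) < 1 + α * y := by nlinarith
  have hlam0 : (0:ℝ) < lam := by linarith
  field_simp

theorem detJ_monotone (lam α yc : ℝ) (hlam : 1 < lam) (hα : 0 ≤ α)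
    (hyc : 0 < yc) (hyceq : yc * (1 + α * yc) = Real.log lam) :
    let D : ℝ → ℝ := fun y =>
      y * (1 + 2 * α * y) / (lam * (1 - Real.exp (-(y * (1 + α * y))))) +
        y * (1 + 2 * α * y)
    StrictMonoOn D (Set.Ioi 0) ∧
      Filter.Tendsto D (nhdsWithin 0 (Set.Ioi 0)) (nhds (1 / lam)) ∧
      1 / lam < 1 ∧ 1 < D yc ∧
      ∃! yd : ℝ, yd ∈ Set.Ioo 0 yc ∧ D yd = 1 := by
  intro D
  have hlam0 : (0:ℝ) < lam := by linarith
  have hD : ∀ y, D y = y * (1 + 2 * α * y) / (lam * (1 - Real.exp (-(y * (1 + α * y))))) +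
      y * (1 + 2 * α * y) := fun y => rfl
  -- Strict monotonicity
  have hSM : StrictMonoOn D (Set.Ioi 0) := by
    intro a ha b hb hab
    simp only [Set.mem_Ioi] at ha hb
    rw [hD, hD, Deq lam α a hlam ha hα, Deq lam α b hlam hb hα]
    have hua : 0 < a * (1 + α * a) := upos hα ha
    have hub : 0 < b * (1 + α * b) := upos hα hb
    have huab : a * (1 + α * a) < b * (1 + α * b) := by
      nlinarith [mul_nonneg (mul_nonneg hα (by linarith : (0:ℝ) ≤ b - a)) (by linarith : (0:ℝ) ≤ a + b)]
    have hφ := phi_mono hua huab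
    have hφa : 0 < a * (1 + α * a) / (1 - Real.exp (-(a * (1 + α * a)))) :=
      div_pos hua (one_sub_exp_pos hua)
    have hda : (0:ℝ) < 1 + α * a := by nlinarith
    have hdb : (0:ℝ) < 1 + α * b := by nlinarith
    have hra : (0:ℝ) < (1 + 2 * α * a) / (lam * (1 + α * a)) := by positivity
    have hrb : (0:ℝ) < (1 + 2 * α * b) / (lam * (1 + α * b)) := by positivity
    have hr : (1 + 2 * α * a) / (lam * (1 + α * a)) ≤ (1 + 2 * α * b) / (lam * (1 + α * b)) := by
      rw [div_le_div_iff₀ (by positivity) (by positivity)]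
      nlinarith [mul_nonneg (mul_nonneg hlam0.le hα) (by linarith : (0:ℝ) ≤ b - a)]
    have hg : a * (1 + 2 * α * a) < b * (1 + 2 * α * b) := by
      nlinarith [mul_nonneg (mul_nonneg hα (by linarith : (0:ℝ) ≤ b - a)) (by linarith : (0:ℝ) ≤ a + b)]
    have h1 : a * (1 + α * a) / (1 - Real.exp (-(a * (1 + α * a)))) *
        ((1 + 2 * α * a) / (lam * (1 + α * a))) ≤
        a * (1 + α * a) / (1 - Real.exp (-(a * (1 + α * a)))) *
        ((1 + 2 * α * b) / (lam * (1 + α * b))) :=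
      mul_le_mul_of_nonneg_left hr hφa.le
    have h2 : a * (1 + α * a) / (1 - Real.exp (-(a * (1 + α * a)))) *
        ((1 + 2 * α * b) / (lam * (1 + α * b))) <
        b * (1 + α * b) / (1 - Real.exp (-(b * (1 + α * b)))) *
        ((1 + 2 * α * b) / (lam * (1 + α * b))) :=
      mul_lt_mul_of_pos_right hφ hrb
    linarith
  -- Limit at 0+
  have T1 : Tendsto (fun y : ℝ => y * (1 + α * y)) (nhdsWithin 0 (Set.Ioi 0))
      (nhdsWithin 0 (Set.Ioi 0)) := by
    rw [tendsto_nhdsWithin_iff]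
    constructor
    · have hc : ContinuousAt (fun y : ℝ => y * (1 + α * y)) 0 := by fun_prop
      have h := hc.tendsto
      simp only [mul_zero, add_zero, zero_mul] at h
      exact h.mono_left nhdsWithin_le_nhds
    · filter_upwards [self_mem_nhdsWithin] with y hy
      have hy' : (0:ℝ) < y := hy
      exact upos hα hy'
  have T2 : Tendsto (fun t : ℝ => t / (1 - Real.exp (-t))) (nhdsWithin 0 (Set.Ioi 0))
      (nhds 1) := by
    have Hd : HasDerivAt (fun t : ℝ => Real.exp (-t)) (-1) 0 := by
      have h := (Real.hasDerivAt_exp (-0)).comp 0 (hasDerivAt_neg 0)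
      simpa [Function.comp_def] using h
    have Hslope := hasDerivAt_iff_tendsto_slope.mp Hd
    have H2 : Tendsto (fun t : ℝ => (1 - Real.exp (-t)) / t) (nhdsWithin 0 {(0:ℝ)}ᶜ)
        (nhds 1) := by
      have h := Hslope.neg
      rw [neg_neg] at h
      refine h.congr fun t => ?_
      simp only [slope_def_field, neg_zero, Real.exp_zero]
      ring
    have H3 : Tendsto (fun t : ℝ => (1 - Real.exp (-t)) / t) (nhdsWithin 0 (Set.Ioi 0))
        (nhds 1) := H2.mono_left (nhdsWithin_mono 0 fun x hx => ne_of_gt hx)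
    have H4 := H3.inv₀ one_ne_zero
    rw [inv_one] at H4
    refine H4.congr fun t => ?_
    rw [inv_div]
  have T3 := T2.comp T1
  have T4 : Tendsto (fun y : ℝ => (1 + 2 * α * y) / (lam * (1 + α * y)))
      (nhdsWithin 0 (Set.Ioi 0)) (nhds (1 / lam)) := by
    have hc : ContinuousAt (fun y : ℝ => (1 + 2 * α * y) / (lam * (1 + α * y))) 0 := by
      apply ContinuousAt.div (by fun_prop) (by fun_prop)
      simp only [mul_zero, add_zero, mul_one]
      exact hlam0.ne'
    have h := hc.tendsto
    simp only [mul_zero, add_zero, mul_one] at h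
    exact h.mono_left nhdsWithin_le_nhds
  have T5 : Tendsto (fun y : ℝ => y * (1 + 2 * α * y)) (nhdsWithin 0 (Set.Ioi 0))
      (nhds 0) := by
    have hc : ContinuousAt (fun y : ℝ => y * (1 + 2 * α * y)) 0 := by fun_prop
    have h := hc.tendsto
    simp only [mul_zero, add_zero, zero_mul] at h
    exact h.mono_left nhdsWithin_le_nhds
  have hT : Tendsto D (nhdsWithin 0 (Set.Ioi 0)) (nhds (1 / lam)) := by
    have h := (T3.mul T4).add T5
    rw [show (1:ℝ) * (1 / lam) + 0 = 1 / lam by ring] at h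
    refine h.congr' ?_
    filter_upwards [self_mem_nhdsWithin] with y hy
    have hy' : (0:ℝ) < y := hy
    rw [hD y, Deq lam α y hlam hy' hα]
    rfl
  have hlt : 1 / lam < 1 := by rw [div_lt_one hlam0]; exact hlam
  -- D yc > 1
  have hyc1 : 1 < D yc := by
    have hlog : 0 < Real.log lam := Real.log_pos hlam
    have hE : Real.exp (-(yc * (1 + α * yc))) = lam⁻¹ := by
      rw [hyceq, Real.exp_neg, Real.exp_log hlam0]
    have hden : lam * (1 - Real.exp (-(yc * (1 + α * yc)))) = lam - 1 := by
      rw [hE]; field_simp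
    have hg : Real.log lam ≤ yc * (1 + 2 * α * yc) := by
      rw [← hyceq]; nlinarith [mul_nonneg hα (mul_self_nonneg yc)]
    have hlb : 1 - lam⁻¹ < Real.log lam := by
      have h := Real.add_one_lt_exp (x := -Real.log lam) (neg_ne_zero.mpr hlog.ne')
      rw [Real.exp_neg, Real.exp_log hlam0] at h
      linarith
    have hinv : lam * lam⁻¹ = 1 := mul_inv_cancel₀ hlam0.ne'
    have h5 : 1 - lam⁻¹ < yc * (1 + 2 * α * yc) := lt_of_lt_of_le hlb hg
    have h6 : 0 < (yc * (1 + 2 * α * yc) - (1 - lam⁻¹)) * lam :=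
      mul_pos (by linarith) hlam0
    have hg2 : lam - 1 < yc * (1 + 2 * α * yc) * lam := by nlinarith [h6, hinv]
    have hden1 : (0:ℝ) < lam - 1 := by linarith
    rw [hD, hden]
    have heq : yc * (1 + 2 * α * yc) / (lam - 1) + yc * (1 + 2 * α * yc)
        = yc * (1 + 2 * α * yc) * lam / (lam - 1) := by field_simp; ring
    rw [heq, lt_div_iff₀ hden1]
    linarith
  refine ⟨hSM, hT, hlt, hyc1, ?_⟩
  -- existence and uniqueness
  have hmem : Set.Ioo (0:ℝ) yc ∈ nhdsWithin 0 (Set.Ioi 0) :=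
    Ioo_mem_nhdsGT_of_mem ⟨le_refl 0, hyc⟩
  have hev : ∀ᶠ y in nhdsWithin 0 (Set.Ioi 0), D y < 1 :=
    hT.eventually (eventually_lt_nhds hlt)
  obtain ⟨ε, hε1, hε2⟩ := (hev.and (eventually_of_mem hmem fun y hy => hy)).exists
  have hεyc : ε < yc := hε2.2
  have hε0 : 0 < ε := hε2.1
  have hne : ∀ y ∈ Set.Icc ε yc, lam * (1 - Real.exp (-(y * (1 + α * y)))) ≠ 0 := by
    intro y hy
    have hy0 : 0 < y := lt_of_lt_of_le hε0 hy.1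
    have hu : 0 < y * (1 + α * y) := upos hα hy0
    exact (mul_pos hlam0 (one_sub_exp_pos hu)).ne'
  have hcont : ContinuousOn D (Set.Icc ε yc) := by
    apply ContinuousOn.add
    · exact ContinuousOn.div (by fun_prop) (by fun_prop) hne
    · fun_prop
  have hsub := intermediate_value_Ioo hεyc.le hcont
  have h1mem : (1:ℝ) ∈ Set.Ioo (D ε) (D yc) := ⟨hε1, hyc1⟩
  obtain ⟨yd, hyd, hydD⟩ := hsub h1mem
  refine ⟨yd, ⟨⟨lt_trans hε0 hyd.1, hyd.2⟩, hydD⟩, ?_⟩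
  intro y' hy'
  exact hSM.injOn (Set.mem_Ioi.mpr hy'.1.1) (Set.mem_Ioi.mpr (lt_trans hε0 hyd.1))
    (by rw [hy'.2, hydD])
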